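/- Let α, β be ordinals and A, B nonempty types, and let W be a set of functions from (the ordinals below) α + β to A × B, the winning condition for Player I in a game of length α + β. For a play u of length α, let W_u denote the residual winning condition of length β: the set of v : β → A × B whose concatenation u ⌢ v (of length α + β) lies in W. Assume (a) for every u : α → A × B, the game of length β with winning condition W_u is determined, and (b) the game of length α with winning condition U = { u | Player I has a winning strategy in the length-β game with condition W_u } is determined. Then the game of length α + β with winning condition W is determined. -/

import Mathlib

abbrev Below (α : Ordinal) := {β : Ordinal // β < α}

def StronglyCausal {α : Ordinal} {A B : Type*}
    (F : (Below α → B) → (Below α → A)) : Prop :=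
  ∀ g g' : Below α → B, ∀ β : Below α,
    (∀ γ : Below α, γ.val < β.val → g γ = g' γ) →
    ∀ γ : Below α, γ.val ≤ β.val → F g γ = F g' γ

def Causal {α : Ordinal} {A B : Type*}
    (G : (Below α → A) → (Below α → B)) : Prop :=
  ∀ f f' : Below α → A, ∀ β : Below α,
    (∀ γ : Below α, γ.val ≤ β.val → f γ = f' γ) →
    ∀ γ : Below α, γ.val ≤ β.val → G f γ = G f' γ

/-- The game of length `γ` over `A × B` with winning condition `W` (for Player I)
is determined: one of the players has a winning strategy. -/
def Determined (γ : Ordinal) (A B : Type*) (W : Set (Below γ → A × B)) : Prop :=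
  (∃ F : (Below γ → B) → (Below γ → A),
      StronglyCausal F ∧ ∀ g, (fun δ => (F g δ, g δ)) ∈ W) ∨
  (∃ G : (Below γ → A) → (Below γ → B),
      Causal G ∧ ∀ f, (fun δ => (f δ, G f δ)) ∉ W)

/-- Concatenation of a play of length `α` with a play of length `β`,
giving a play of length `α + β`. -/
noncomputable def concatPlay {α β : Ordinal} {C : Type*}
    (u : Below α → C) (v : Below β → C) : Below (α + β) → C :=
  fun δ =>
    if h : δ.val < α then u ⟨δ.val, h⟩
    else v ⟨δ.val - α, (Ordinal.sub_lt_of_le (le_of_not_gt h)).mpr δ.2⟩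

namespace AddDetAux

variable {C : Type*}

/-- Embed an index below `α` into indices below `α + β`. -/
def hIdx (α β : Ordinal) (δ : Below α) : Below (α + β) :=
  ⟨δ.val, lt_of_lt_of_le δ.2 le_self_add⟩

/-- Embed an index below `β` into indices below `α + β`. -/
def tIdx (α β : Ordinal) (δ : Below β) : Below (α + β) :=
  ⟨α + δ.val, (add_lt_add_iff_left α).mpr δ.2⟩

/-- Head of a play of length `α + β`. -/
def hd (α β : Ordinal) (f : Below (α + β) → C) : Below α → C := fun δ => f (hIdx α β δ)

/-- Tail of a play of length `α + β`. -/
def tl (α β : Ordinal) (f : Below (α + β) → C) : Below β → C := fun δ => f (tIdx α β δ)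

theorem tIdx_lt {α β : Ordinal} {δ : Below β} {p : Ordinal} (hpge : α ≤ p)
    (hδ : δ.val < p - α) : (tIdx α β δ).val < p := by
  have : α + δ.val < α + (p - α) := (add_lt_add_iff_left α).mpr hδ
  rwa [Ordinal.add_sub_cancel_of_le hpge] at this

theorem tIdx_le {α β : Ordinal} {δ : Below β} {p : Ordinal} (hpge : α ≤ p)
    (hδ : δ.val ≤ p - α) : (tIdx α β δ).val ≤ p := by
  have : α + δ.val ≤ α + (p - α) := add_le_add_right hδ α
  rwa [Ordinal.add_sub_cancel_of_le hpge] at this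

theorem sub_le_sub {a p α : Ordinal} (hpge : α ≤ p) (h : a ≤ p) : a - α ≤ p - α :=
  Ordinal.sub_le.mpr (by rwa [Ordinal.add_sub_cancel_of_le hpge])

end AddDetAux

open AddDetAux

theorem addition_determinacy (α β : Ordinal) (A B : Type) [Nonempty A] [Nonempty B]
    (W : Set (Below (α + β) → A × B))
    (hres : ∀ u : Below α → A × B,
      Determined β A B {v | concatPlay u v ∈ W})
    (hU : Determined α A B
      {u | ∃ F : (Below β → B) → (Below β → A),
        StronglyCausal F ∧ ∀ g, (fun δ => (F g δ, g δ)) ∈ {v | concatPlay u v ∈ W}}) :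
    Determined (α + β) A B W := by
  classical
  obtain ⟨F₀, hF₀c, hF₀w⟩ | ⟨G₀, hG₀c, hG₀w⟩ := hU
  · -- Player I wins the `U`-game, hence the long game.
    left
    refine ⟨fun g p =>
      if h : p.val < α then F₀ (hd α β g) ⟨p.val, h⟩
      else (hF₀w (hd α β g)).choose (tl α β g)
        ⟨p.val - α, (Ordinal.sub_lt_of_le (le_of_not_gt h)).mpr p.2⟩, ?_, ?_⟩
    · intro g g' p hlt q hq
      by_cases hp : p.val < α
      · have hqα : q.val < α := lt_of_le_of_lt hq hp
        simp only [dif_pos hqα]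
        exact hF₀c (hd α β g) (hd α β g') ⟨p.val, hp⟩
          (fun γ hγ => hlt (hIdx α β γ) hγ) ⟨q.val, hqα⟩ hq
      · have hpge : α ≤ p.val := le_of_not_gt hp
        have hhd : hd α β g = hd α β g' :=
          funext fun δ => hlt (hIdx α β δ) (lt_of_lt_of_le δ.2 hpge)
        by_cases hqα : q.val < α
        · simp only [dif_pos hqα, hhd]
        · simp only [dif_neg hqα]
          rw [hhd]
          apply (hF₀w (hd α β g')).choose_spec.1 (tl α β g) (tl α β g')
            ⟨p.val - α, (Ordinal.sub_lt_of_le hpge).mpr p.2⟩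
            (fun δ hδ => hlt (tIdx α β δ) (tIdx_lt hpge hδ))
            ⟨q.val - α, (Ordinal.sub_lt_of_le (le_of_not_gt hqα)).mpr q.2⟩ (sub_le_sub hpge hq)
    · intro g
      have hkey := (hF₀w (hd α β g)).choose_spec.2 (tl α β g)
      have heq : concatPlay (fun δ => (F₀ (hd α β g) δ, hd α β g δ))
          (fun δ => ((hF₀w (hd α β g)).choose (tl α β g) δ, tl α β g δ)) =
          fun p => ((if h : p.val < α then F₀ (hd α β g) ⟨p.val, h⟩
            else (hF₀w (hd α β g)).choose (tl α β g)
              ⟨p.val - α, (Ordinal.sub_lt_of_le (le_of_not_gt h)).mpr p.2⟩), g p) := by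
        funext p
        by_cases h : p.val < α
        · simp only [concatPlay, dif_pos h]
          rfl
        · simp only [concatPlay, dif_neg h]
          refine Prod.ext rfl ?_
          exact congrArg g (Subtype.ext (Ordinal.add_sub_cancel_of_le (le_of_not_gt h)))
      exact heq ▸ hkey
  · -- Player II wins the `U`-game, hence the long game.
    right
    have hw : ∀ f₁ : Below α → A,
        ∃ G : (Below β → A) → (Below β → B), Causal G ∧
          ∀ f, (fun δ => (f δ, G f δ)) ∉
            {v | concatPlay (fun δ => (f₁ δ, G₀ f₁ δ)) v ∈ W} := fun f₁ =>
      (hres (fun δ => (f₁ δ, G₀ f₁ δ))).resolve_left (hG₀w f₁)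
    refine ⟨fun f p =>
      if h : p.val < α then G₀ (hd α β f) ⟨p.val, h⟩
      else (hw (hd α β f)).choose (tl α β f)
        ⟨p.val - α, (Ordinal.sub_lt_of_le (le_of_not_gt h)).mpr p.2⟩, ?_, ?_⟩
    · intro f f' p hle q hq
      by_cases hp : p.val < α
      · have hqα : q.val < α := lt_of_le_of_lt hq hp
        simp only [dif_pos hqα]
        exact hG₀c (hd α β f) (hd α β f') ⟨p.val, hp⟩
          (fun γ hγ => hle (hIdx α β γ) hγ) ⟨q.val, hqα⟩ hq
      · have hpge : α ≤ p.val := le_of_not_gt hp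
        have hhd : hd α β f = hd α β f' :=
          funext fun δ => hle (hIdx α β δ) (le_of_lt (lt_of_lt_of_le δ.2 hpge))
        by_cases hqα : q.val < α
        · simp only [dif_pos hqα, hhd]
        · simp only [dif_neg hqα]
          rw [hhd]
          apply (hw (hd α β f')).choose_spec.1 (tl α β f) (tl α β f')
            ⟨p.val - α, (Ordinal.sub_lt_of_le hpge).mpr p.2⟩
            (fun δ hδ => hle (tIdx α β δ) (tIdx_le hpge hδ))
            ⟨q.val - α, (Ordinal.sub_lt_of_le (le_of_not_gt hqα)).mpr q.2⟩ (sub_le_sub hpge hq)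
    · intro f
      have hkey := (hw (hd α β f)).choose_spec.2 (tl α β f)
      intro hmem
      apply hkey
      have heq : concatPlay (fun δ => (hd α β f δ, G₀ (hd α β f) δ))
          (fun δ => (tl α β f δ, (hw (hd α β f)).choose (tl α β f) δ)) =
          fun p => (f p, (if h : p.val < α then G₀ (hd α β f) ⟨p.val, h⟩
            else (hw (hd α β f)).choose (tl α β f)
              ⟨p.val - α, (Ordinal.sub_lt_of_le (le_of_not_gt h)).mpr p.2⟩)) := by
        funext p
        by_cases h : p.val < α
        · simp only [concatPlay, dif_pos h]
          rfl
        · simp only [concatPlay, dif_neg h]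
          refine Prod.ext ?_ rfl
          exact congrArg f (Subtype.ext (Ordinal.add_sub_cancel_of_le (le_of_not_gt h)))
      show concatPlay _ _ ∈ W
      rw [heq]
      exact hmem
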